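/- Let λ₁, …, λ_N be positive reals that are ℤ-independent (no nontrivial integer linear combination vanishes), and let u(t) = Σ_{k=1}^N (a_k e^{iλ_k t} + ā_k e^{−iλ_k t}) be a real-valued trigonometric polynomial whose spectrum is contained in {±λ₁,…,±λ_N} with 0 ∉ Sp[u]. Then for each k, the mean value lim_{T→∞} (1/T)∫₀^T |u(t)|·e^{−iλ_k t} dt equals 0, i.e. λ_k is not in the spectrum of |u|. -/

import Mathlib

open Filter Complex

lemma meanExpZero (μ : ℝ) (hμ : μ ≠ 0) :
    Tendsto (fun T : ℝ => (1 / T : ℂ) * ∫ t in (0:ℝ)..T, Complex.exp (Complex.I * μ * t))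
      atTop (nhds 0) := by
  have hc : (Complex.I * μ) ≠ 0 := by
    simp [Complex.I_ne_zero, hμ, Complex.ext_iff]
  have key : ∀ T : ℝ, (∫ t in (0:ℝ)..T, Complex.exp (Complex.I * μ * t))
      = (Complex.exp (Complex.I * μ * T) - 1) / (Complex.I * μ) := by
    intro T
    have := integral_exp_mul_complex (a := (0:ℝ)) (b := T) hc
    simpa using this
  apply squeeze_zero_norm' (a := fun T : ℝ => (2 / |μ|) * (1 / T))
  · filter_upwards [eventually_gt_atTop (0:ℝ)] with T hT
    rw [key]
    have h1 : ‖Complex.exp (Complex.I * μ * T) - 1‖ ≤ 2 := by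
      calc ‖Complex.exp (Complex.I * μ * T) - 1‖
          ≤ ‖Complex.exp (Complex.I * μ * T)‖ + ‖(1:ℂ)‖ := norm_sub_le _ _
        _ ≤ 2 := by
            have : ‖Complex.exp (Complex.I * μ * T)‖ = 1 := by
              rw [Complex.norm_exp]
              simp
            rw [this]; norm_num
    have h2 : ‖(Complex.I * (μ:ℂ))‖ = |μ| := by
      simp
    rw [norm_mul, norm_div, norm_div, h2]
    have h3 : ‖(1:ℂ)‖ / ‖(T:ℂ)‖ = 1 / T := by
      simp [abs_of_pos hT]
    rw [h3]
    rw [div_mul_eq_mul_div, mul_comm (2 / |μ|)]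
    rw [one_mul]
    calc ‖cexp (Complex.I * μ * T) - 1‖ / |μ| * T⁻¹ ≤ 2 / |μ| * T⁻¹ := by gcongr
      _ = 1 / T * (2 / |μ|) := by rw [one_div, mul_comm]
  · have h := tendsto_inv_atTop_zero.const_mul (2 / |μ|)
    simpa [one_div] using h

def RepP (N : ℕ) (Λ : Fin N → ℝ) (P : ℤ → Prop) (v : ℝ → ℂ) : Prop :=
  ∃ (ι : Type) (_ : Fintype ι) (c : ι → ℂ) (m : ι → Fin N → ℤ),
    (∀ i, P (∑ k, m i k)) ∧
    ∀ t : ℝ, v t = ∑ i, c i * Complex.exp (Complex.I * ((∑ k, (m i k : ℝ) * Λ k) : ℝ) * t)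

lemma RepP.mul {N Λ} {P Q R : ℤ → Prop} {v w : ℝ → ℂ}
    (hPQ : ∀ x y, P x → Q y → R (x + y))
    (hv : RepP N Λ P v) (hw : RepP N Λ Q w) :
    RepP N Λ R (fun t => v t * w t) := by
  obtain ⟨ι, _, c, m, hm, hveq⟩ := hv
  obtain ⟨ι', _, c', m', hm', hweq⟩ := hw
  refine ⟨ι × ι', inferInstance, fun p => c p.1 * c' p.2, fun p => m p.1 + m' p.2, ?_, ?_⟩
  · intro i
    have : (∑ k, (m i.1 + m' i.2) k) = (∑ k, m i.1 k) + ∑ k, m' i.2 k := by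
      simp [Finset.sum_add_distrib]
    rw [this]
    exact hPQ _ _ (hm i.1) (hm' i.2)
  · intro t
    simp only []
    rw [hveq t, hweq t, Finset.sum_mul_sum, Fintype.sum_prod_type]
    refine Finset.sum_congr rfl fun i _ => Finset.sum_congr rfl fun j _ => ?_
    rw [mul_mul_mul_comm, ← Complex.exp_add]
    congr 2
    push_cast [Pi.add_apply, add_mul, Finset.sum_add_distrib]
    ring

lemma RepP.add {N Λ} {P : ℤ → Prop} {v w : ℝ → ℂ}
    (hv : RepP N Λ P v) (hw : RepP N Λ P w) :
    RepP N Λ P (fun t => v t + w t) := by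
  obtain ⟨ι, _, c, m, hm, hveq⟩ := hv
  obtain ⟨ι', _, c', m', hm', hweq⟩ := hw
  refine ⟨ι ⊕ ι', inferInstance, Sum.elim c c', Sum.elim m m', ?_, ?_⟩
  · rintro (i | j)
    · exact hm i
    · exact hm' j
  · intro t
    simp only []
    rw [hveq t, hweq t, Fintype.sum_sum_type]
    simp

lemma RepP.const {N Λ} {P : ℤ → Prop} (hP0 : P 0) (z : ℂ) :
    RepP N Λ P (fun _ => z) := by
  refine ⟨Unit, inferInstance, fun _ => z, fun _ => 0, fun _ => by simpa using hP0, ?_⟩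
  intro t
  simp

lemma RepP.pow {N Λ} {v : ℝ → ℂ} (hv : RepP N Λ Even v) (n : ℕ) :
    RepP N Λ Even (fun t => v t ^ n) := by
  induction n with
  | zero => simpa using RepP.const Even.zero 1
  | succ n ih =>
      exact RepP.mul (fun x y hx hy => hx.add hy) ih hv

lemma RepP.finsetSum {N Λ} {P : ℤ → Prop} (hP0 : P 0) {β : Type*} {s : Finset β}
    {f : β → ℝ → ℂ} (h : ∀ b ∈ s, RepP N Λ P (f b)) :
    RepP N Λ P (fun t => ∑ b ∈ s, f b t) := by
  classical
  induction s using Finset.induction_on with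
  | empty => simpa using RepP.const hP0 0
  | insert _ _ hb ih =>
      rename_i b s'
      simp only [Finset.sum_insert hb]
      exact RepP.add (h b (Finset.mem_insert_self b s'))
        (ih fun x hx => h x (Finset.mem_insert_of_mem hx))

lemma RepP.mean {N : ℕ} {Λ : Fin N → ℝ}
    (hind : ∀ m : Fin N → ℤ, (∑ k, (m k : ℝ) * Λ k) = 0 → m = 0)
    {v : ℝ → ℂ} (hv : RepP N Λ Even v) (k : Fin N) :
    Tendsto (fun T : ℝ => (1 / T : ℂ) *
        ∫ t in (0:ℝ)..T, v t * Complex.exp (-(Complex.I * (Λ k) * t)))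
      atTop (nhds 0) := by
  obtain ⟨ι, _, c, m, hm, hveq⟩ := hv
  set μ : ι → ℝ := fun i => ∑ j, (m i j : ℝ) * Λ j with hμ
  have hsk : (∑ j, (((Pi.single k 1 : Fin N → ℤ) j : ℤ) : ℝ) * Λ j) = Λ k := by
    rw [Finset.sum_eq_single k]
    · simp
    · intro b _ hb; simp [Pi.single_eq_of_ne hb]
    · simp
  have hne : ∀ i, μ i - Λ k ≠ 0 := by
    intro i h
    have h0 : (∑ j, (((m i - Pi.single k 1 : Fin N → ℤ) j : ℤ) : ℝ) * Λ j) = 0 := by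
      push_cast [Pi.sub_apply, sub_mul, Finset.sum_sub_distrib]
      rw [show (∑ j, (((Pi.single k 1 : Fin N → ℤ) j : ℤ) : ℝ) * Λ j) = Λ k from hsk] at *
      simpa [hμ] using h
    have hz := hind _ h0
    rw [sub_eq_zero] at hz
    have h1 : (∑ j, m i j) = 1 := by rw [hz]; simp [Finset.sum_pi_single']
    have := hm i
    rw [h1] at this
    exact (by decide : ¬ Even (1:ℤ)) this
  have hpt : ∀ t : ℝ, v t * Complex.exp (-(Complex.I * (Λ k) * t))
      = ∑ i, c i * Complex.exp (Complex.I * ((μ i - Λ k : ℝ) : ℂ) * t) := by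
    intro t
    rw [hveq t, Finset.sum_mul]
    refine Finset.sum_congr rfl fun i _ => ?_
    rw [mul_assoc, ← Complex.exp_add]
    congr 2
    simp only [hμ]
    push_cast
    ring
  have hint : ∀ T : ℝ, (∫ t in (0:ℝ)..T, v t * Complex.exp (-(Complex.I * (Λ k) * t)))
      = ∑ i, c i * ∫ t in (0:ℝ)..T, Complex.exp (Complex.I * ((μ i - Λ k : ℝ) : ℂ) * t) := by
    intro T
    rw [intervalIntegral.integral_congr (g := fun t =>
        ∑ i, c i * Complex.exp (Complex.I * ((μ i - Λ k : ℝ) : ℂ) * t))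
        (fun t _ => hpt t)]
    rw [intervalIntegral.integral_finset_sum]
    · exact Finset.sum_congr rfl fun i _ => intervalIntegral.integral_const_mul _ _
    · intro i _
      exact (continuous_const.mul (Complex.continuous_exp.comp
        (continuous_const.mul Complex.continuous_ofReal))).intervalIntegrable _ _
  have : (fun T : ℝ => (1 / T : ℂ) *
        ∫ t in (0:ℝ)..T, v t * Complex.exp (-(Complex.I * (Λ k) * t)))
      = fun T : ℝ => ∑ i, c i * ((1 / T : ℂ) *
        ∫ t in (0:ℝ)..T, Complex.exp (Complex.I * ((μ i - Λ k : ℝ) : ℂ) * t)) := by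
    funext T
    rw [hint T, Finset.mul_sum]
    exact Finset.sum_congr rfl fun i _ => by ring
  rw [this]
  have h0 : (0:ℂ) = ∑ i : ι, c i * 0 := by simp
  rw [h0]
  exact tendsto_finset_sum _ fun i _ => (meanExpZero _ (hne i)).const_mul (c i)

/-- If u is a real trigonometric polynomial with ℤ-independent positive
frequencies λ₁,…,λ_N, then no λ_k belongs to the spectrum of |u|. -/
theorem spectrum_abs_avoids_frequencies (N : ℕ) (Λ : Fin N → ℝ)
    (hpos : ∀ k, 0 < Λ k)
    (hind : ∀ m : Fin N → ℤ, (∑ k, (m k : ℝ) * Λ k) = 0 → m = 0)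
    (a : Fin N → ℂ)
    (u : ℝ → ℂ)
    (hu : ∀ t : ℝ, u t = ∑ k, (a k * Complex.exp (Complex.I * (Λ k) * t) +
        (starRingEnd ℂ) (a k) * Complex.exp (-(Complex.I * (Λ k) * t)))) :
    ∀ k : Fin N,
      Tendsto (fun T : ℝ => (1 / T : ℂ) *
          ∫ t in (0:ℝ)..T,
            ((‖u t‖ : ℝ) : ℂ) * Complex.exp (-(Complex.I * (Λ k) * t)))
        atTop (nhds 0) := by
  intro k
  -- u is real-valued
  have hconj : ∀ t : ℝ, (starRingEnd ℂ) (u t) = u t := by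
    intro t
    rw [hu t, map_sum]
    refine Finset.sum_congr rfl fun j _ => ?_
    rw [map_add, map_mul, map_mul, ← Complex.exp_conj, ← Complex.exp_conj]
    simp only [map_mul, map_neg, Complex.conj_I, Complex.conj_ofReal,
      RingHomCompTriple.comp_apply, RingHom.id_apply, starRingEnd_self_apply]
    ring
  have hre : ∀ t : ℝ, ((u t).re : ℂ) = u t := fun t => Complex.conj_eq_iff_re.mp (hconj t)
  -- continuity of u
  have hcexp : ∀ μ : ℝ, Continuous fun t : ℝ => Complex.exp (Complex.I * μ * t) :=
    fun μ => Complex.continuous_exp.comp (continuous_const.mul Complex.continuous_ofReal)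
  have hcexp' : ∀ μ : ℝ, Continuous fun t : ℝ => Complex.exp (-(Complex.I * μ * t)) :=
    fun μ => Complex.continuous_exp.comp (continuous_const.mul Complex.continuous_ofReal).neg
  have hcontu : Continuous u := by
    rw [show u = fun t : ℝ => ∑ k, (a k * Complex.exp (Complex.I * (Λ k) * t) +
        (starRingEnd ℂ) (a k) * Complex.exp (-(Complex.I * (Λ k) * t))) from funext hu]
    exact continuous_finset_sum _ fun j _ =>
      (continuous_const.mul (hcexp (Λ j))).add (continuous_const.mul (hcexp' (Λ j)))
  -- uniform bound
  set M : ℝ := ∑ j, 2 * ‖a j‖ with hMdef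
  have hM0 : 0 ≤ M := Finset.sum_nonneg fun j _ => by positivity
  have hM : ∀ t : ℝ, ‖u t‖ ≤ M := by
    intro t
    rw [hu t, hMdef]
    refine (norm_sum_le _ _).trans (Finset.sum_le_sum fun j _ => ?_)
    have e1 : ‖Complex.exp (Complex.I * (Λ j) * t)‖ = 1 := by
      rw [Complex.norm_exp]; simp
    have e2 : ‖Complex.exp (-(Complex.I * (Λ j) * t))‖ = 1 := by
      rw [Complex.norm_exp]; simp
    calc ‖a j * Complex.exp (Complex.I * (Λ j) * t) +
          (starRingEnd ℂ) (a j) * Complex.exp (-(Complex.I * (Λ j) * t))‖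
        ≤ ‖a j * Complex.exp (Complex.I * (Λ j) * t)‖ +
          ‖(starRingEnd ℂ) (a j) * Complex.exp (-(Complex.I * (Λ j) * t))‖ := norm_add_le _ _
      _ = ‖a j‖ + ‖a j‖ := by
          rw [norm_mul, norm_mul, e1, e2]; simp
      _ = 2 * ‖a j‖ := by ring
  -- u is an odd trigonometric polynomial
  have hrepu : RepP N Λ Odd u := by
    refine ⟨Fin N ⊕ Fin N, inferInstance, Sum.elim a (fun j => (starRingEnd ℂ) (a j)),
      Sum.elim (fun j => Pi.single j 1) (fun j => -Pi.single j 1), ?_, ?_⟩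
    · rintro (j | j)
      · simp [Finset.sum_pi_single']
      · simp [Finset.sum_pi_single']
    · intro t
      rw [hu t, Fintype.sum_sum_type, Finset.sum_add_distrib]
      congr 1
      · refine Finset.sum_congr rfl fun j _ => ?_
        have h1 : (∑ i, (((Pi.single j 1 : Fin N → ℤ) i : ℤ) : ℝ) * Λ i) = Λ j := by
          rw [Finset.sum_eq_single j]
          · simp
          · intro b _ hb; simp [Pi.single_eq_of_ne hb]
          · simp
        simp only [Sum.elim_inl]
        rw [h1]
      · refine Finset.sum_congr rfl fun j _ => ?_
        have h1 : (∑ i, (((-Pi.single j 1 : Fin N → ℤ) i : ℤ) : ℝ) * Λ i) = -Λ j := by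
          rw [Finset.sum_eq_single j]
          · simp
          · intro b _ hb; simp [Pi.single_eq_of_ne hb]
          · simp
        simp only [Sum.elim_inr]
        rw [h1]
        congr 1
        push_cast
        ring
  have hrepu2 : RepP N Λ Even (fun t => u t ^ 2) := by
    have h := RepP.mul (fun x y hx hy => Odd.add_odd hx hy) hrepu hrepu
    have : (fun t => u t * u t) = fun t => u t ^ 2 := by funext t; ring
    rwa [this] at h
  -- main ε-argument
  rw [NormedAddCommGroup.tendsto_nhds_zero]
  intro ε hε
  obtain ⟨p, hp⟩ := exists_polynomial_near_of_continuousOn 0 (M ^ 2) Real.sqrt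
    Real.continuous_sqrt.continuousOn (ε / 4) (by positivity)
  set W : ℝ → ℂ := fun t => ((p.eval (((u t).re) ^ 2) : ℝ) : ℂ) with hWdef
  have hx : ∀ t : ℝ, ((u t).re) ^ 2 ∈ Set.Icc (0:ℝ) (M ^ 2) := by
    intro t
    have habs : |(u t).re| ≤ M := by
      have h1 := hM t
      rwa [← hre t, Complex.norm_real, Real.norm_eq_abs] at h1
    constructor
    · positivity
    · calc ((u t).re) ^ 2 = |(u t).re| ^ 2 := (_root_.sq_abs _).symm
        _ ≤ M ^ 2 := pow_le_pow_left₀ (abs_nonneg _) habs 2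
  have hWrep : RepP N Λ Even W := by
    have hWf : W = fun t => ∑ i ∈ Finset.range (p.natDegree + 1),
        ((p.coeff i : ℝ) : ℂ) * (u t ^ 2) ^ i := by
      funext t
      rw [hWdef]
      simp only []
      rw [Polynomial.eval_eq_sum_range]
      push_cast
      refine Finset.sum_congr rfl fun i _ => ?_
      rw [hre t]
    rw [hWf]
    exact RepP.finsetSum Even.zero fun i _ =>
      RepP.mul (fun x y hx hy => by simpa using hx.add hy)
        (RepP.const Even.zero _) (hrepu2.pow i)
  have hWmean := RepP.mean hind hWrep k
  have hWb := (NormedAddCommGroup.tendsto_nhds_zero.mp hWmean) (ε / 2) (by positivity)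
  have hcontW : Continuous W :=
    Complex.continuous_ofReal.comp (p.continuous.comp
      ((Complex.continuous_re.comp hcontu).pow 2))
  have hcontA : Continuous fun t : ℝ => ((‖u t‖ : ℝ) : ℂ) :=
    Complex.continuous_ofReal.comp (continuous_norm.comp hcontu)
  filter_upwards [hWb, eventually_gt_atTop (0:ℝ)] with T hB hT
  have hsplit : (∫ t in (0:ℝ)..T, ((‖u t‖ : ℝ) : ℂ) * Complex.exp (-(Complex.I * (Λ k) * t)))
      = (∫ t in (0:ℝ)..T, (((‖u t‖ : ℝ) : ℂ) - W t) * Complex.exp (-(Complex.I * (Λ k) * t)))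
        + ∫ t in (0:ℝ)..T, W t * Complex.exp (-(Complex.I * (Λ k) * t)) := by
    rw [← intervalIntegral.integral_add
      (f := fun t => (((‖u t‖ : ℝ) : ℂ) - W t) * Complex.exp (-(Complex.I * (Λ k) * t)))
      (g := fun t => W t * Complex.exp (-(Complex.I * (Λ k) * t)))
      (((hcontA.sub hcontW).mul (hcexp' (Λ k))).intervalIntegrable _ _)
      ((hcontW.mul (hcexp' (Λ k))).intervalIntegrable _ _)]
    refine intervalIntegral.integral_congr fun t _ => ?_
    ring
  have hnd : ∀ t ∈ Set.uIoc (0:ℝ) T,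
      ‖(((‖u t‖ : ℝ) : ℂ) - W t) * Complex.exp (-(Complex.I * (Λ k) * t))‖ ≤ ε / 4 := by
    intro t _
    have e2 : ‖Complex.exp (-(Complex.I * (Λ k) * t))‖ = 1 := by
      rw [Complex.norm_exp]; simp
    rw [norm_mul, e2, mul_one]
    have : (((‖u t‖ : ℝ) : ℂ) - W t) = (((‖u t‖ - p.eval (((u t).re) ^ 2) : ℝ)) : ℂ) := by
      rw [hWdef]; push_cast; ring
    rw [this, Complex.norm_real, Real.norm_eq_abs]
    have habs : ‖u t‖ = Real.sqrt (((u t).re) ^ 2) := by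
      rw [← hre t, Complex.norm_real, Real.norm_eq_abs, Real.sqrt_sq_eq_abs]
      simp
    rw [habs]
    have := hp _ (hx t)
    rw [abs_sub_comm] at this
    linarith
  have hI1 : ‖∫ t in (0:ℝ)..T, (((‖u t‖ : ℝ) : ℂ) - W t) *
      Complex.exp (-(Complex.I * (Λ k) * t))‖ ≤ ε / 4 * T := by
    have h := intervalIntegral.norm_integral_le_of_norm_le_const hnd
    rwa [sub_zero, abs_of_pos hT] at h
  have hnormT : ‖(1 / T : ℂ)‖ = 1 / T := by
    rw [norm_div, norm_one, Complex.norm_real, Real.norm_eq_abs, abs_of_pos hT]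
  calc ‖(1 / T : ℂ) * ∫ t in (0:ℝ)..T,
        ((‖u t‖ : ℝ) : ℂ) * Complex.exp (-(Complex.I * (Λ k) * t))‖
      = ‖(1 / T : ℂ) * (∫ t in (0:ℝ)..T, (((‖u t‖ : ℝ) : ℂ) - W t) *
          Complex.exp (-(Complex.I * (Λ k) * t)))
        + (1 / T : ℂ) * ∫ t in (0:ℝ)..T, W t * Complex.exp (-(Complex.I * (Λ k) * t))‖ := by
        rw [hsplit, mul_add]
    _ ≤ ‖(1 / T : ℂ) * (∫ t in (0:ℝ)..T, (((‖u t‖ : ℝ) : ℂ) - W t) *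
          Complex.exp (-(Complex.I * (Λ k) * t)))‖
        + ‖(1 / T : ℂ) * ∫ t in (0:ℝ)..T, W t * Complex.exp (-(Complex.I * (Λ k) * t))‖ :=
        norm_add_le _ _
    _ < ε / 4 + ε / 2 := by
        refine add_lt_add_of_le_of_lt ?_ hB
        rw [norm_mul, hnormT]
        calc (1 / T) * ‖∫ t in (0:ℝ)..T, (((‖u t‖ : ℝ) : ℂ) - W t) *
              Complex.exp (-(Complex.I * (Λ k) * t))‖
            ≤ (1 / T) * (ε / 4 * T) :=
              mul_le_mul_of_nonneg_left hI1 (by positivity)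
          _ = ε / 4 := by field_simp
    _ < ε := by linarith
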